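/- arXiv:1207.6923 — 3 statements merged into one kernel-verified Lean document; each statement's English description precedes it below -/
import Mathlib

section
/- Let S be an inverse semigroup with zero, G a group, σ : S^× → G an idempotent pure morphism, and s, t ∈ S^× with σ(s) = σ(t). Suppose φ is a character on E(S) with φ(s* s) = 1 and φ(t* t) = 1. Then the element u := t s* s satisfies: u ≠ 0, u ≤ s, u ≤ t, and u* u = s* s · t* t; in particular φ(u* u) = 1. -/
/-- An inverse semigroup structure on a semigroup with zero: `star s` is the unique
generalized inverse of `s`. -/
structure IsInvSemigroup (S : Type*) [SemigroupWithZero S] (star : S → S) : Prop where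
  mul_star_mul : ∀ s : S, s * star s * s = s
  star_mul_star : ∀ s : S, star s * s * star s = star s
  star_unique : ∀ s t : S, s * t * s = s → t * s * t = t → t = star s

/-- `e` belongs to the semilattice of idempotents `E(S) = {s s* : s ∈ S}`. -/
def IsIdemE {S : Type*} [SemigroupWithZero S] (star : S → S) (e : S) : Prop :=
  ∃ x : S, e = x * star x

/-- The natural partial order on an inverse semigroup: `s ≤ t` iff `s = e t` for some
idempotent `e`. -/
def natLe {S : Type*} [SemigroupWithZero S] (star : S → S) (s t : S) : Prop :=
  ∃ e : S, IsIdemE star e ∧ s = e * t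

/-- `m` is a maximal element of `(S^×, ≤)`. -/
def IsMaxNonzero {S : Type*} [SemigroupWithZero S] (star : S → S) (m : S) : Prop :=
  m ≠ 0 ∧ ∀ t : S, t ≠ 0 → natLe star m t → t = m

/-- `S` is `0`-`F`-inverse: every nonzero element lies beneath a unique maximal element
of `(S^×, ≤)`. -/
def ZeroFInverse {S : Type*} [SemigroupWithZero S] (star : S → S) : Prop :=
  ∀ s : S, s ≠ 0 → ∃! m : S, IsMaxNonzero star m ∧ natLe star s m

/-- A morphism (grading) `σ : S^× → G`: `σ(st) = σ(s)σ(t)` whenever `st ≠ 0`. -/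
def IsGrading {S : Type*} [SemigroupWithZero S] {G : Type*} [Group G] (σ : S → G) : Prop :=
  ∀ s t : S, s ≠ 0 → t ≠ 0 → s * t ≠ 0 → σ (s * t) = σ s * σ t

/-- A character on the semilattice of idempotents `E(S)`: a nonzero semilattice
homomorphism `E → {0,1}` (modelled by `Bool` under `&&`) sending `0` to `0`. -/
def IsCharE {S : Type*} [SemigroupWithZero S] (star : S → S) (φ : S → Bool) : Prop :=
  (∀ e f : S, IsIdemE star e → IsIdemE star f → φ (e * f) = (φ e && φ f)) ∧
  φ 0 = false ∧ ∃ e : S, IsIdemE star e ∧ φ e = true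


section Aux
variable {S : Type*} [SemigroupWithZero S] {star : S → S}

lemma sstar_star (h : IsInvSemigroup S star) (x : S) : star (star x) = x :=
  (h.star_unique (star x) x (h.star_mul_star x) (h.mul_star_mul x)).symm

lemma sidem_sq (h : IsInvSemigroup S star) (x : S) :
    (x * star x) * (x * star x) = x * star x := by
  rw [← mul_assoc, h.mul_star_mul]

lemma sstar_of_idem (h : IsInvSemigroup S star) {e : S} (he : e * e = e) : star e = e :=
  (h.star_unique e e (by rw [he, he]) (by rw [he, he])).symm

lemma sidem_mul (h : IsInvSemigroup S star) {e f : S} (he : e * e = e) (hf : f * f = f) :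
    (e * f) * (e * f) = e * f := by
  have he' : ∀ x : S, e * (e * x) = e * x := fun x => by rw [← mul_assoc, he]
  have hf' : ∀ x : S, f * (f * x) = f * x := fun x => by rw [← mul_assoc, hf]
  set a := star (e * f) with ha
  have hm : e * (f * (a * (e * f))) = e * f := by
    have := h.mul_star_mul (e * f)
    rw [← ha] at this
    simpa only [mul_assoc] using this
  have hsa : ∀ x : S, a * (e * (f * (a * x))) = a * x := fun x => by
    have h1 := h.star_mul_star (e * f)
    rw [← ha] at h1
    calc a * (e * (f * (a * x))) = (a * (e * f) * a) * x := by simp only [mul_assoc]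
    _ = a * x := by rw [h1]
  have key : f * a * e = a := by
    have := h.star_unique (e * f) (f * a * e) ?_ ?_
    · rw [← ha] at this; exact this
    · calc (e * f) * (f * a * e) * (e * f)
          = e * (f * (f * (a * (e * (e * f))))) := by simp only [mul_assoc]
      _ = e * (f * (a * (e * f))) := by rw [hf', he']
      _ = e * f := hm
    · calc (f * a * e) * (e * f) * (f * a * e)
          = f * (a * (e * (e * (f * (f * (a * e)))))) := by simp only [mul_assoc]
      _ = f * (a * (e * (f * (a * e)))) := by rw [he', hf']
      _ = f * (a * e) := by rw [hsa]
      _ = f * a * e := by simp only [mul_assoc]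
  have haa : a * a = a := by
    calc a * a = (f * a * e) * (f * a * e) := by rw [key]
    _ = f * (a * (e * (f * (a * e)))) := by simp only [mul_assoc]
    _ = f * (a * e) := by rw [hsa]
    _ = a := by rw [← mul_assoc]; exact key
  have hefa : e * f = a := by
    have h1 : star a = a := sstar_of_idem h haa
    have h2 : star (star (e * f)) = e * f := sstar_star h (e * f)
    rw [← ha, h1] at h2
    exact h2.symm
  rw [hefa, haa]

lemma sidem_comm (h : IsInvSemigroup S star) {e f : S} (he : e * e = e) (hf : f * f = f) :
    e * f = f * e := by
  have he' : ∀ x : S, e * (e * x) = e * x := fun x => by rw [← mul_assoc, he]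
  have hf' : ∀ x : S, f * (f * x) = f * x := fun x => by rw [← mul_assoc, hf]
  have hef := sidem_mul h he hf
  have hfe := sidem_mul h hf he
  have hef' : e * (f * (e * f)) = e * f := by simpa only [mul_assoc] using hef
  have hfe' : f * (e * (f * e)) = f * e := by simpa only [mul_assoc] using hfe
  have h1 : (e * f) * (f * e) * (e * f) = e * f := by
    calc (e * f) * (f * e) * (e * f) = e * (f * (f * (e * (e * f)))) := by
          simp only [mul_assoc]
    _ = e * (f * (e * f)) := by rw [hf', he']
    _ = e * f := hef'
  have h2 : (f * e) * (e * f) * (f * e) = f * e := by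
    calc (f * e) * (e * f) * (f * e) = f * (e * (e * (f * (f * e)))) := by
          simp only [mul_assoc]
    _ = f * (e * (f * e)) := by rw [he', hf']
    _ = f * e := hfe'
  have := h.star_unique (e * f) (f * e) h1 h2
  rw [sstar_of_idem h hef] at this
  exact this.symm

lemma sstar_mul (h : IsInvSemigroup S star) (x y : S) :
    star (x * y) = star y * star x := by
  have hsx : (star x * x) * (star x * x) = star x * x := by
    have := sidem_sq h (star x); rwa [sstar_star h] at this
  have hyy : (y * star y) * (y * star y) = y * star y := sidem_sq h y
  have comm : (star x * x) * (y * star y) = (y * star y) * (star x * x) :=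
    sidem_comm h hsx hyy
  refine (h.star_unique (x * y) (star y * star x) ?_ ?_).symm
  · have key : x * ((y * star y) * ((star x * x) * y)) = x * y := by
      calc x * ((y * star y) * ((star x * x) * y))
          = x * (((y * star y) * (star x * x)) * y) := by simp only [mul_assoc]
      _ = x * (((star x * x) * (y * star y)) * y) := by rw [← comm]
      _ = (x * star x * x) * (y * star y * y) := by simp only [mul_assoc]
      _ = x * y := by rw [h.mul_star_mul, h.mul_star_mul]
    simpa only [mul_assoc] using key
  · have key : star y * ((star x * x) * ((y * star y) * star x)) = star y * star x := by
      calc star y * ((star x * x) * ((y * star y) * star x))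
          = star y * (((star x * x) * (y * star y)) * star x) := by simp only [mul_assoc]
      _ = star y * (((y * star y) * (star x * x)) * star x) := by rw [comm]
      _ = (star y * y * star y) * (star x * x * star x) := by simp only [mul_assoc]
      _ = star y * star x := by rw [h.star_mul_star, h.star_mul_star]
    simpa only [mul_assoc] using key

end Aux

/-- for an idempotent pure morphism `σ`, nonzero `s, t` with `σ s = σ t`, and a
character `φ` with `φ(s* s) = 1 = φ(t* t)`, the element `u = t s* s` is nonzero, lies
below both `s` and `t`, and satisfies `u* u = (s* s)(t* t)`, whence `φ(u* u) = 1`. -/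
theorem stmt2 {S G : Type*} [SemigroupWithZero S] [Group G] (star : S → S)
    (hinv : IsInvSemigroup S star) (σ : S → G) (hσ : IsGrading σ)
    (hpure : ∀ s : S, s ≠ 0 → σ s = 1 → IsIdemE star s)
    (s t : S) (hs : s ≠ 0) (ht : t ≠ 0) (hst : σ s = σ t)
    (φ : S → Bool) (hφ : IsCharE star φ)
    (hφs : φ (star s * s) = true) (hφt : φ (star t * t) = true) :
    t * star s * s ≠ 0 ∧
    natLe star (t * star s * s) s ∧
    natLe star (t * star s * s) t ∧
    star (t * star s * s) * (t * star s * s) = (star s * s) * (star t * t) ∧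
    φ (star (t * star s * s) * (t * star s * s)) = true  := by
  obtain ⟨hchar, hzero, -⟩ := hφ
  have hsx : star s ≠ 0 := fun hz => hs (by rw [← hinv.mul_star_mul s, hz, mul_zero, zero_mul])
  have htx : star t ≠ 0 := fun hz => ht (by rw [← hinv.mul_star_mul t, hz, mul_zero, zero_mul])
  have hsIdem : IsIdemE star (star s * s) := ⟨star s, by rw [sstar_star hinv]⟩
  have htIdem : IsIdemE star (star t * t) := ⟨star t, by rw [sstar_star hinv]⟩
  have hss2 : (star s * s) * (star s * s) = star s * s := by
    have := sidem_sq hinv (star s); rwa [sstar_star hinv] at this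
  have htt2 : (star t * t) * (star t * t) = star t * t := by
    have := sidem_sq hinv (star t); rwa [sstar_star hinv] at this
  have comm : (star s * s) * (star t * t) = (star t * t) * (star s * s) :=
    sidem_comm hinv hss2 htt2
  -- u ≠ 0
  have hu : t * star s * s ≠ 0 := by
    intro hz
    have h0 : (star t * t) * (star s * s) = 0 := by
      calc (star t * t) * (star s * s) = star t * (t * star s * s) := by
            simp only [mul_assoc]
      _ = 0 := by rw [hz, mul_zero]
    have hc := hchar _ _ htIdem hsIdem
    rw [h0, hzero, hφt, hφs] at hc
    simp at hc
  -- σ computations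
  have hssnz : s * star s ≠ 0 := fun hz => hs (by rw [← hinv.mul_star_mul s, hz, zero_mul])
  have hσ1 : σ (s * star s) = 1 := by
    have h1 : σ (s * star s * s) = σ (s * star s) * σ s :=
      hσ (s * star s) s hssnz hs (by rw [hinv.mul_star_mul]; exact hs)
    rw [hinv.mul_star_mul s] at h1
    exact mul_eq_right.mp h1.symm
  have hσstar : σ (star s) = (σ s)⁻¹ := by
    have h2 := hσ s (star s) hs hsx hssnz
    rw [hσ1] at h2
    exact (inv_eq_of_mul_eq_one_right h2.symm).symm
  have hts : t * star s ≠ 0 := fun hz => hu (by rw [hz, zero_mul])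
  have hσts : σ (t * star s) = 1 := by
    rw [hσ t (star s) ht hsx hts, hσstar, hst, mul_inv_cancel]
  have hE_ts : IsIdemE star (t * star s) := hpure _ hts hσts
  -- u ≤ s
  have hles : natLe star (t * star s * s) s := ⟨t * star s, hE_ts, rfl⟩
  -- u ≤ t
  have hEe : IsIdemE star (t * star s * s * star t) := by
    refine ⟨t * star s, ?_⟩
    rw [sstar_mul hinv, sstar_star hinv]
    simp only [mul_assoc]
  have hlet : natLe star (t * star s * s) t := by
    refine ⟨t * star s * s * star t, hEe, ?_⟩
    calc t * star s * s
        = t * (star s * s) := by simp only [mul_assoc]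
      _ = (t * star t * t) * (star s * s) := by rw [hinv.mul_star_mul]
      _ = t * ((star t * t) * (star s * s)) := by simp only [mul_assoc]
      _ = t * ((star s * s) * (star t * t)) := by rw [← comm]
      _ = (t * star s * s * star t) * t := by simp only [mul_assoc]
  -- u* u
  have hstaru : star (t * star s * s) = star s * (s * star t) := by
    rw [sstar_mul hinv (t * star s) s, sstar_mul hinv t (star s), sstar_star hinv]
  have huu : star (t * star s * s) * (t * star s * s) = (star s * s) * (star t * t) := by
    calc star (t * star s * s) * (t * star s * s)
        = (star s * (s * star t)) * (t * star s * s) := by rw [hstaru]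
      _ = (star s * s) * ((star t * t) * (star s * s)) := by simp only [mul_assoc]
      _ = (star s * s) * ((star s * s) * (star t * t)) := by rw [← comm]
      _ = ((star s * s) * (star s * s)) * (star t * t) := by simp only [mul_assoc]
      _ = (star s * s) * (star t * t) := by rw [hss2]
  refine ⟨hu, hles, hlet, huu, ?_⟩
  rw [huu, hchar _ _ hsIdem htIdem, hφs, hφt]
  simp
end

section
/- Let S be a 0-F-inverse semigroup and e, f ∈ E(S) ∖ {0}. Then there exists s ∈ S^× with s* s = e and s s* = f if and only if there exists a maximal element m of (S^×, ≤) with e ≤ m* m and m e m* = f. -/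
section Aux

variable {S : Type*} [SemigroupWithZero S] (star : S → S)

lemma aux_star_star (hinv : IsInvSemigroup S star) (s : S) : star (star s) = s :=
  (hinv.star_unique (star s) s (hinv.star_mul_star s) (hinv.mul_star_mul s)).symm

lemma aux_sq_right (hinv : IsInvSemigroup S star) (s : S) :
    (star s * s) * (star s * s) = star s * s := by
  have h := hinv.star_mul_star s
  calc (star s * s) * (star s * s) = (star s * s * star s) * s := by
        simp only [mul_assoc]
    _ = star s * s := by rw [h]

lemma aux_sq_left (hinv : IsInvSemigroup S star) (s : S) :
    (s * star s) * (s * star s) = s * star s := by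
  have h := hinv.mul_star_mul s
  calc (s * star s) * (s * star s) = (s * star s * s) * star s := by
        simp only [mul_assoc]
    _ = s * star s := by rw [h]

lemma aux_idem_sq (hinv : IsInvSemigroup S star) {e : S} (he : IsIdemE star e) :
    e * e = e := by
  obtain ⟨x, rfl⟩ := he
  exact aux_sq_left star hinv x

lemma aux_idem_prod (hinv : IsInvSemigroup S star) {e f : S}
    (he : e * e = e) (hf : f * f = f) :
    (e * f) * (e * f) = e * f ∧ star (e * f) = e * f := by
  set x := star (e * f) with hx
  have h1 := hinv.mul_star_mul (e * f)
  have h2 := hinv.star_mul_star (e * f)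
  rw [← hx] at h1 h2
  have he' : ∀ t : S, e * (e * t) = e * t := fun t => by rw [← mul_assoc, he]
  have hf' : ∀ t : S, f * (f * t) = f * t := fun t => by rw [← mul_assoc, hf]
  have h1' : e * (f * (x * (e * f))) = e * f := by
    simpa only [mul_assoc] using h1
  have h2t : ∀ t : S, x * (e * (f * (x * t))) = x * t := fun t => by
    have := congrArg (· * t) h2
    simpa only [mul_assoc] using this
  have hA : f * x * e = x := by
    apply hinv.star_unique
    · simp only [mul_assoc, he', hf']
      exact h1'
    · simp only [mul_assoc, he', hf', h2t]
  have hxx : x * x = x := by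
    conv_lhs => rw [← hA]
    conv_rhs => rw [← hA]
    simp only [mul_assoc, h2t]
  have hsx : star x = x := (hinv.star_unique x x (by rw [hxx, hxx]) (by rw [hxx, hxx])).symm
  have hef : e * f = x := by
    have := hinv.star_unique x (e * f) h2 h1
    rw [hsx] at this
    exact this
  constructor
  · rw [hef, hxx]
  · rw [hef]

lemma aux_idem_comm (hinv : IsInvSemigroup S star) {e f : S}
    (he : e * e = e) (hf : f * f = f) : e * f = f * e := by
  obtain ⟨hef2, hefs⟩ := aux_idem_prod star hinv he hf
  obtain ⟨hfe2, _⟩ := aux_idem_prod star hinv hf he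
  have he' : ∀ t : S, e * (e * t) = e * t := fun t => by rw [← mul_assoc, he]
  have hf' : ∀ t : S, f * (f * t) = f * t := fun t => by rw [← mul_assoc, hf]
  have key : f * e = star (e * f) := by
    apply hinv.star_unique
    · simp only [mul_assoc, he', hf']
      simpa only [mul_assoc] using hef2
    · simp only [mul_assoc, he', hf']
      simpa only [mul_assoc] using hfe2
  rw [key, hefs]

lemma aux_star_mul (hinv : IsInvSemigroup S star) (s t : S) :
    star (s * t) = star t * star s := by
  have hss : ∀ u : S, s * (star s * (s * u)) = s * u := fun u => by
    have := congrArg (· * u) (hinv.mul_star_mul s)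
    simpa only [mul_assoc] using this
  have htt : t * (star t * t) = t := by
    simpa only [mul_assoc] using hinv.mul_star_mul t
  have hsss : star s * (s * star s) = star s := by
    simpa only [mul_assoc] using hinv.star_mul_star s
  have httt : ∀ u : S, star t * (t * (star t * u)) = star t * u := fun u => by
    have := congrArg (· * u) (hinv.star_mul_star t)
    simpa only [mul_assoc] using this
  have hcomm : (t * star t) * (star s * s) = (star s * s) * (t * star t) :=
    aux_idem_comm star hinv (aux_sq_left star hinv t) (aux_sq_right star hinv s)
  have hcomm1 : ∀ u : S, t * (star t * (star s * (s * u))) = star s * (s * (t * (star t * u))) :=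
    fun u => by
      have := congrArg (· * u) hcomm
      simpa only [mul_assoc] using this
  have hcomm2 : ∀ u : S, star s * (s * (t * (star t * u))) = t * (star t * (star s * (s * u))) :=
    fun u => (hcomm1 u).symm
  symm
  apply hinv.star_unique
  · show s * t * (star t * star s) * (s * t) = s * t
    simp only [mul_assoc]
    rw [hcomm1 t, htt, hss]
  · show star t * star s * (s * t) * (star t * star s) = star t * star s
    simp only [mul_assoc]
    rw [hcomm2 (star s), hsss, httt]

lemma aux_star_idem (hinv : IsInvSemigroup S star) {e : S} (he : e * e = e) :
    star e = e :=
  (hinv.star_unique e e (by rw [he, he]) (by rw [he, he])).symm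

lemma aux_star_zero (hinv : IsInvSemigroup S star) : star (0 : S) = 0 :=
  (hinv.star_unique 0 0 (by simp) (by simp)).symm

lemma aux_le (hinv : IsInvSemigroup S star) {s t : S} (h : natLe star s t) :
    s = t * (star s * s) := by
  obtain ⟨g, hg, rfl⟩ := h
  have hg2 : g * g = g := aux_idem_sq star hinv hg
  have hgs : star g = g := aux_star_idem star hinv hg2
  have hstar : star (g * t) = star t * g := by rw [aux_star_mul star hinv, hgs]
  rw [hstar]
  have htt : t * (star t * t) = t := by
    simpa only [mul_assoc] using hinv.mul_star_mul t
  have hcomm : (t * star t) * g = g * (t * star t) :=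
    aux_idem_comm star hinv (aux_sq_left star hinv t) hg2
  have hcomm1 : ∀ u : S, t * (star t * (g * u)) = g * (t * (star t * u)) := fun u => by
    have := congrArg (· * u) hcomm
    simpa only [mul_assoc] using this
  have hgg : ∀ u : S, g * (g * u) = g * u := fun u => by rw [← mul_assoc, hg2]
  simp only [mul_assoc, hgg]
  rw [hcomm1 t, htt]

end Aux

/-- in a `0`-`F`-inverse semigroup, for nonzero idempotents `e, f` there is
a nonzero `s` with `s* s = e` and `s s* = f` iff there is a maximal element `m` of
`(S^×, ≤)` with `e ≤ m* m` and `m e m* = f`. -/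
theorem stmt9 {S : Type*} [SemigroupWithZero S] (star : S → S)
    (hinv : IsInvSemigroup S star) (hF : ZeroFInverse star)
    (e f : S) (he : IsIdemE star e) (hf : IsIdemE star f) (he0 : e ≠ 0) (hf0 : f ≠ 0) :
    (∃ s : S, s ≠ 0 ∧ star s * s = e ∧ s * star s = f) ↔
    (∃ m : S, IsMaxNonzero star m ∧ natLe star e (star m * m) ∧ m * e * star m = f) := by
  have he2 : e * e = e := aux_idem_sq star hinv he
  have hesi : star e = e := aux_star_idem star hinv he2
  have he' : ∀ t : S, e * (e * t) = e * t := fun t => by rw [← mul_assoc, he2]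
  constructor
  · rintro ⟨s, hs0, hse, hsf⟩
    obtain ⟨m, ⟨hmax, hle⟩, -⟩ := hF s hs0
    have hsm : s = m * e := by
      have := aux_le star hinv hle
      rwa [hse] at this
    have hstars : star s = e * star m := by
      rw [hsm, aux_star_mul star hinv, hesi]
    have hmm2 : (star m * m) * (star m * m) = star m * m := aux_sq_right star hinv m
    have hcomm : e * (star m * m) = (star m * m) * e := aux_idem_comm star hinv he2 hmm2
    have hee : e = e * (star m * m) := by
      conv_lhs => rw [← hse, hstars, hsm]
      calc (e * star m) * (m * e) = e * ((star m * m) * e) := by simp only [mul_assoc]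
        _ = e * (e * (star m * m)) := by rw [← hcomm]
        _ = e * (star m * m) := he' _
    refine ⟨m, hmax, ⟨e, he, hee⟩, ?_⟩
    rw [← hsf, hstars, hsm]
    simp only [mul_assoc, he']
  · rintro ⟨m, hmax, hle, hmf⟩
    have hme : e = (star m * m) * e := by
      have := aux_le star hinv hle
      rwa [hesi, he2] at this
    have hstars : star (m * e) = e * star m := by
      rw [aux_star_mul star hinv, hesi]
    have hsse : star (m * e) * (m * e) = e := by
      rw [hstars]
      calc (e * star m) * (m * e) = e * ((star m * m) * e) := by simp only [mul_assoc]
        _ = e * e := by rw [← hme]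
        _ = e := he2
    have hssf : (m * e) * star (m * e) = f := by
      rw [hstars, ← hmf]
      simp only [mul_assoc, he']
    have hs0 : m * e ≠ 0 := fun h => he0 (by rw [← hsse, h, aux_star_zero star hinv, zero_mul])
    exact ⟨m * e, hs0, hsse, hssf⟩
end

section
/- Let S be a 0-F-inverse semigroup, G a group, σ : S^× → G a morphism, and e ∈ E(S) ∖ {0}. Then the following three subsets of G coincide: {σ(s) : s ∈ M(S), e ≤ s* s, s e s* = e} ∪ {1}, {σ(s) : s ∈ S^×, e ≤ s* s, s e s* = e}, and {σ(s) : s ∈ S^×, s s* = s* s = e}. -/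
section Helpers
variable {S : Type*} [SemigroupWithZero S] {star : S → S}

lemma idem2 {f : S} (hf : f * f = f) (w : S) : f * (f * w) = f * w := by
  rw [← mul_assoc, hf]

variable (h : IsInvSemigroup S star)
include h

lemma istar_star (s : S) : star (star s) = s :=
  (h.star_unique (star s) s (h.star_mul_star s) (h.mul_star_mul s)).symm

lemma star_of_idem {e : S} (he : e * e = e) : star e = e :=
  (h.star_unique e e (by rw [he, he]) (by rw [he, he])).symm

lemma mm2 (s w : S) : s * (star s * (s * w)) = s * w := by
  rw [← mul_assoc, ← mul_assoc, h.mul_star_mul]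

lemma mm2' (s w : S) : star s * (s * (star s * w)) = star s * w := by
  rw [← mul_assoc, ← mul_assoc, h.star_mul_star]

lemma tIdm (s : S) : s * (star s * s) = s := by
  rw [← mul_assoc, h.mul_star_mul]

lemma tIdm' (s : S) : star s * (s * star s) = star s := by
  rw [← mul_assoc, h.star_mul_star]

lemma idemE_mul {e : S} (he : IsIdemE star e) : e * e = e := by
  obtain ⟨x, rfl⟩ := he
  calc x * star x * (x * star x) = x * (star x * (x * star x)) := by simp only [mul_assoc]
    _ = x * star x := by rw [tIdm' h]

lemma idemE_of_mul {e : S} (he : e * e = e) : IsIdemE star e :=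
  ⟨e, by rw [star_of_idem h he, he]⟩

lemma idem_ss (s : S) : (s * star s) * (s * star s) = s * star s :=
  idemE_mul h ⟨s, rfl⟩

lemma idem_sts (s : S) : (star s * s) * (star s * s) = star s * s := by
  calc (star s * s) * (star s * s) = star s * (s * (star s * s)) := by simp only [mul_assoc]
    _ = star s * s := by rw [mm2' h]

lemma idem_mul {e f : S} (he : e * e = e) (hf : f * f = f) : (e * f) * (e * f) = e * f := by
  obtain ⟨x, hx⟩ : ∃ x, x = star (e * f) := ⟨_, rfl⟩
  have P : ∀ w, x * (e * (f * (x * w))) = x * w := by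
    intro w
    simp only [← mul_assoc]
    rw [mul_assoc x e f]
    have := h.star_mul_star (e * f)
    rw [← hx] at this
    rw [this]
  have hmsm : e * (f * (x * (e * f))) = e * f := by
    have := h.mul_star_mul (e * f)
    rw [← hx] at this
    simpa only [mul_assoc] using this
  have key : f * x * e = x := by
    rw [hx]
    apply h.star_unique
    · rw [← hx]
      calc (e * f) * (f * x * e) * (e * f)
          = e * (f * (f * (x * (e * (e * f))))) := by simp only [mul_assoc]
        _ = e * (f * (x * (e * f))) := by rw [idem2 hf, idem2 he]
        _ = e * f := hmsm
    · rw [← hx]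
      calc (f * x * e) * (e * f) * (f * x * e)
          = f * (x * (e * (e * (f * (f * (x * e)))))) := by simp only [mul_assoc]
        _ = f * (x * (e * (f * (x * e)))) := by rw [idem2 he, idem2 hf]
        _ = f * (x * e) := by rw [P]
        _ = f * x * e := by rw [mul_assoc]
  have hxx : x * x = x := by
    conv_lhs => rw [← key]
    calc (f * x * e) * (f * x * e) = f * (x * (e * (f * (x * e)))) := by simp only [mul_assoc]
      _ = f * (x * e) := by rw [P]
      _ = f * x * e := by rw [mul_assoc]
      _ = x := key
  have hefx : e * f = x := by
    rw [← star_of_idem h hxx, hx, istar_star h]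
  rw [hefx, hxx]

lemma idem_comm {e f : S} (he : e * e = e) (hf : f * f = f) : e * f = f * e := by
  have hef := idem_mul h he hf
  have hfe := idem_mul h hf he
  have hef' : e * (f * (e * f)) = e * f := by simpa only [mul_assoc] using hef
  have hfe' : f * (e * (f * e)) = f * e := by simpa only [mul_assoc] using hfe
  have : f * e = star (e * f) := by
    apply h.star_unique
    · calc (e * f) * (f * e) * (e * f) = e * (f * (f * (e * (e * f)))) := by
            simp only [mul_assoc]
        _ = e * (f * (e * f)) := by rw [idem2 hf, idem2 he]
        _ = e * f := hef'
    · calc (f * e) * (e * f) * (f * e) = f * (e * (e * (f * (f * e)))) := by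
            simp only [mul_assoc]
        _ = f * (e * (f * e)) := by rw [idem2 he, idem2 hf]
        _ = f * e := hfe'
  rw [this, star_of_idem h hef]

lemma istar_mul (s t : S) : star (s * t) = star t * star s := by
  have key : ∀ w, t * (star t * (star s * (s * w))) = star s * (s * (t * (star t * w))) := by
    intro w
    simp only [← mul_assoc]
    rw [mul_assoc (t * star t) (star s) s, idem_comm h (idem_ss h t) (idem_sts h s)]
    simp only [mul_assoc]
  symm; apply h.star_unique
  · calc (s * t) * (star t * star s) * (s * t)
        = s * (t * (star t * (star s * (s * t)))) := by simp only [mul_assoc]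
      _ = s * (star s * (s * (t * (star t * t)))) := by rw [key]
      _ = s * (t * (star t * t)) := by rw [mm2 h]
      _ = s * t := by rw [tIdm h]
  · calc (star t * star s) * (s * t) * (star t * star s)
        = star t * (star s * (s * (t * (star t * star s)))) := by simp only [mul_assoc]
      _ = star t * (t * (star t * (star s * (s * star s)))) := by rw [← key]
      _ = star t * (star s * (s * star s)) := by rw [mm2' h]
      _ = star t * star s := by rw [tIdm' h]

lemma istar_ne_zero {s : S} (hs : s ≠ 0) : star s ≠ 0 := by
  intro h0
  apply hs
  conv_lhs => rw [← h.mul_star_mul s, h0, mul_zero, zero_mul]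

lemma natLe_of_right {a b f : S} (hf : f * f = f) (hab : a = b * f) : natLe star a b := by
  refine ⟨a * star a, ⟨a, rfl⟩, ?_⟩
  have hsa : star a = f * star b := by rw [hab, istar_mul h, star_of_idem h hf]
  have : (a * star a) * b = a := by
    rw [hsa, hab]
    calc (b * f * (f * star b)) * b = b * (f * (f * (star b * b))) := by simp only [mul_assoc]
      _ = b * (f * (star b * b)) := by rw [idem2 hf]
      _ = b * ((star b * b) * f) := by rw [idem_comm h hf (idem_sts h b)]
      _ = b * (star b * (b * f)) := by simp only [mul_assoc]
      _ = b * f := mm2 h b f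
  exact this.symm

lemma natLe_forms {a b : S} (hab : natLe star a b) :
    a = b * (star a * a) ∧ a = (a * star a) * b := by
  obtain ⟨g, hg, rfl⟩ := hab
  have hgg := idemE_mul h hg
  have hsa : star (g * b) = star b * g := by rw [istar_mul h, star_of_idem h hgg]
  have swap : ∀ w, b * (star b * (g * w)) = g * (b * (star b * w)) := by
    intro w
    calc b * (star b * (g * w)) = (b * star b) * g * w := by simp only [mul_assoc]
      _ = g * (b * star b) * w := by rw [idem_comm h (idem_ss h b) hgg]
      _ = g * (b * (star b * w)) := by simp only [mul_assoc]
  constructor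
  · rw [hsa]
    simp only [mul_assoc]
    symm
    calc b * (star b * (g * (g * b))) = b * (star b * (g * b)) := by rw [idem2 hgg]
      _ = g * (b * (star b * b)) := swap b
      _ = g * b := by rw [tIdm h]
  · rw [hsa]
    simp only [mul_assoc]
    symm
    calc g * (b * (star b * (g * b))) = g * (g * (b * (star b * b))) := by rw [swap]
      _ = g * (b * (star b * b)) := by rw [idem2 hgg]
      _ = g * b := by rw [tIdm h]

lemma natLe_trans {a b c : S} (hab : natLe star a b) (hbc : natLe star b c) :
    natLe star a c := by
  obtain ⟨g, hg, rfl⟩ := hab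
  obtain ⟨f, hf, rfl⟩ := hbc
  exact ⟨g * f, idemE_of_mul h (idem_mul h (idemE_mul h hg) (idemE_mul h hf)),
    (mul_assoc g f c).symm⟩

omit h in
lemma sig_idem {G : Type*} [Group G] {σ : S → G} (hσ : IsGrading σ)
    {f : S} (hf0 : f ≠ 0) (hff : f * f = f) : σ f = 1 := by
  have h1 := hσ f f hf0 hf0 (by rw [hff]; exact hf0)
  rw [hff] at h1
  have h2 : σ f * σ f = σ f * 1 := by rw [mul_one, ← h1]
  exact mul_left_cancel h2

end Helpers

/-- for a `0`-`F`-inverse semigroup `S`, a morphism `σ : S^× → G` and a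
nonzero idempotent `e`, the following subsets of `G` coincide:
`{σ(s) : s ∈ M(S), e ≤ s* s, s e s* = e} ∪ {1}`,
`{σ(s) : s ∈ S^×, e ≤ s* s, s e s* = e}` and
`{σ(s) : s ∈ S^×, s s* = s* s = e}`. -/
theorem stmt10 {S G : Type*} [SemigroupWithZero S] [Group G] (star : S → S)
    (hinv : IsInvSemigroup S star) (hF : ZeroFInverse star)
    (σ : S → G) (hσ : IsGrading σ)
    (e : S) (he : IsIdemE star e) (he0 : e ≠ 0) :
    (insert (1 : G) {g : G | ∃ s : S, IsMaxNonzero star s ∧ natLe star e (star s * s) ∧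
        s * e * star s = e ∧ g = σ s} =
      {g : G | ∃ s : S, s ≠ 0 ∧ natLe star e (star s * s) ∧ s * e * star s = e ∧ g = σ s}) ∧
    ({g : G | ∃ s : S, s ≠ 0 ∧ natLe star e (star s * s) ∧ s * e * star s = e ∧ g = σ s} =
      {g : G | ∃ s : S, s ≠ 0 ∧ s * star s = e ∧ star s * s = e ∧ g = σ s}) := by
  have h := hinv
  have hee : e * e = e := idemE_mul h he
  have hse : star e = e := star_of_idem h hee
  -- key computations for s with s * e * star s = e and e ≤ star s * s
  have keyfacts : ∀ s : S, s ≠ 0 → natLe star e (star s * s) → s * e * star s = e →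
      (s * e ≠ 0 ∧ (s * e) * star (s * e) = e ∧ star (s * e) * (s * e) = e ∧
        σ (s * e) = σ s) := by
    intro s hs0 hle hcong
    have hst : star (s * e) = e * star s := by rw [istar_mul h, hse]
    have hess : e * (star s * s) = e := by
      have h2 := (natLe_forms h hle).2
      rw [hse, hee] at h2
      exact h2.symm
    have ht0 : s * e ≠ 0 := by
      intro h0
      apply he0
      rw [← hcong, h0, zero_mul]
    have htt : (s * e) * star (s * e) = e := by
      rw [hst]
      calc s * e * (e * star s) = s * (e * (e * star s)) := by simp only [mul_assoc]
        _ = s * (e * star s) := by rw [idem2 hee]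
        _ = s * e * star s := by rw [mul_assoc]
        _ = e := hcong
    have hstt : star (s * e) * (s * e) = e := by
      rw [hst]
      calc (e * star s) * (s * e) = (e * (star s * s)) * e := by simp only [mul_assoc]
        _ = e * e := by rw [hess]
        _ = e := hee
    have hsig : σ (s * e) = σ s := by
      rw [hσ s e hs0 he0 ht0, sig_idem hσ he0 hee, mul_one]
    exact ⟨ht0, htt, hstt, hsig⟩
  constructor
  · ext g
    simp only [Set.mem_insert_iff, Set.mem_setOf_eq]
    constructor
    · rintro (rfl | ⟨s, hmax, hle, hcong, rfl⟩)
      · refine ⟨e, he0, ?_, ?_, (sig_idem hσ he0 hee).symm⟩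
        · rw [hse, hee]
          exact ⟨e, he, hee.symm⟩
        · rw [hee, hse, hee]
      · exact ⟨s, hmax.1, hle, hcong, rfl⟩
    · rintro ⟨s, hs0, hle, hcong, rfl⟩
      right
      obtain ⟨m, ⟨hmax, hsm⟩, -⟩ := hF s hs0
      obtain ⟨f, hf, hfm⟩ := hsm
      have hf0 : f ≠ 0 := by
        rintro rfl
        rw [zero_mul] at hfm
        exact hs0 hfm
      have hσs : σ s = σ m := by
        rw [hfm, hσ f m hf0 hmax.1 (hfm ▸ hs0), sig_idem hσ hf0 (idemE_mul h hf), one_mul]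
      obtain ⟨ht0, htt, hstt, hsig⟩ := keyfacts s hs0 hle hcong
      have htm : natLe star (s * e) m :=
        natLe_trans h (natLe_of_right h hee rfl) ⟨f, hf, hfm⟩
      have htme : s * e = m * e := by
        have h1 := (natLe_forms h htm).1
        rw [hstt] at h1
        exact h1
      have hms : star (m * e) = e * star m := by rw [istar_mul h, hse]
      have hmem : m * e * star m = e := by
        calc m * e * star m = m * (e * (e * star m)) := by rw [idem2 hee]; simp only [mul_assoc]
          _ = (m * e) * star (m * e) := by rw [hms]; simp only [mul_assoc]
          _ = (s * e) * star (s * e) := by rw [← htme]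
          _ = e := htt
      have h1 : e * (star m * (m * e)) = e := by
        have h2 : star (m * e) * (m * e) = e := by rw [← htme]; exact hstt
        rw [hms] at h2
        simpa only [mul_assoc] using h2
      have heu : e * (star m * m) = e := by
        calc e * (star m * m)
            = e * (e * (star m * m)) := (idem2 hee _).symm
          _ = e * ((star m * m) * e) := by rw [idem_comm h hee (idem_sts h m)]
          _ = e * (star m * (m * e)) := by simp only [mul_assoc]
          _ = e := h1
      exact ⟨m, hmax, ⟨e, he, heu.symm⟩, hmem, hσs⟩
  · ext g
    simp only [Set.mem_setOf_eq]
    constructor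
    · rintro ⟨s, hs0, hle, hcong, rfl⟩
      obtain ⟨ht0, htt, hstt, hsig⟩ := keyfacts s hs0 hle hcong
      exact ⟨s * e, ht0, htt, hstt, hsig.symm⟩
    · rintro ⟨s, hs0, hsse, hsts, rfl⟩
      refine ⟨s, hs0, ?_, ?_, rfl⟩
      · rw [hsts]
        exact ⟨e, he, hee.symm⟩
      · calc s * e * star s = (s * star s * s) * star s := by
              rw [← hsts]; simp only [mul_assoc]
          _ = s * star s := by rw [h.mul_star_mul]
          _ = e := hsse
end
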